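/- Let N(G,X,δ) be an instance of the Network Coding problem with m edges and k messages, and let I_N(Y,R) be the index coding instance obtained from N by the reduction. If there exists a linear (n,q) index code for I_N of length ℓ = n·m over the finite field F_q (i.e., a linear index code achieving rate m = μ(I_N)), then there exists a linear (n,q) network code for N over F_q. -/

import Mathlib

/-- `mu R` is the maximum, over side-information sets `H`, of the number of distinct
messages demanded by clients of `R` whose side-information set equals `H`. -/
def mu {ι : Type} [DecidableEq ι] (R : Finset (ι × Finset ι)) : ℕ :=
  (R.image Prod.snd).sup fun H => ((R.filter fun r => r.2 = H).image Prod.fst).card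

/-- `f` is an index code of block length `n` and length `ℓ` for the instance with
clients `R`: every client `(i, H) ∈ R` can decode message `i` from the broadcast
`f X` together with the messages indexed by `H`. -/
def IsIndexCode {ι A : Type} (R : Finset (ι × Finset ι)) (n ℓ : ℕ)
    (f : (ι → Fin n → A) → Fin ℓ → A) : Prop :=
  ∀ r ∈ R, ∀ X X' : ι → Fin n → A,
    f X = f X' → (∀ j ∈ r.2, X j = X' j) → X r.1 = X' r.1

/-- An instance of the Network Coding problem with `m` edges (indexed by `Fin m`),
`k` messages, and `d` output edges.  The input edges `S = {e_0, …, e_{k-1}}` are the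
edges with index `< k`, and the output edges `D` are the edges with index `≥ m - d`.
`P e` is the set of parent edges of `e`.  Input edges have no parents (their tail has
in-degree `0`), non-input edges have a parent, output edges have no children (their
head has out-degree `0`); `ord` witnesses acyclicity.  The demand function `δ` is
onto when restricted to output edges. -/
structure NetworkInstance (m k d : ℕ) where
  hkd : k + d ≤ m
  P : Fin m → Finset (Fin m)
  input_no_parent : ∀ e : Fin m, (e : ℕ) < k → P e = ∅
  noninput_has_parent : ∀ e : Fin m, k ≤ (e : ℕ) → P e ≠ ∅
  output_no_child : ∀ e e' : Fin m, e' ∈ P e → (e' : ℕ) < m - d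
  ord : Fin m → ℕ
  acyclic : ∀ e e' : Fin m, e' ∈ P e → ord e' < ord e
  δ : Fin m → Fin k
  δ_surj : ∀ i : Fin k, ∃ e : Fin m, m - d ≤ (e : ℕ) ∧ δ e = i

namespace NetworkInstance

variable {m k d : ℕ}

theorem k_le_m (N : NetworkInstance m k d) : k ≤ m :=
  le_trans (Nat.le_add_right k d) N.hkd

/-- `f` is an `(n, q)` network code for `N` over the alphabet `A` (with `|A| = q`):
`f e` is the global encoding function of edge `e`, satisfying
(N1) on input edges it outputs the corresponding message,
(N2) on output edges it outputs the demanded message,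
(N3) on non-input edges it factors through the parents' encoding functions. -/
def IsNetworkCode (N : NetworkInstance m k d) {A : Type} (n : ℕ)
    (f : Fin m → (Fin k → Fin n → A) → Fin n → A) : Prop :=
  (∀ (e : Fin m) (h : (e : ℕ) < k) (X : Fin k → Fin n → A), f e X = X ⟨(e : ℕ), h⟩) ∧
  (∀ e : Fin m, m - d ≤ (e : ℕ) → ∀ X : Fin k → Fin n → A, f e X = X (N.δ e)) ∧
  (∀ e : Fin m, k ≤ (e : ℕ) →
    ∃ φ : ({p : Fin m // p ∈ N.P e} → Fin n → A) → Fin n → A,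
      ∀ X : Fin k → Fin n → A, f e X = φ fun p => f p.1 X)

/-- A linear `(n, q)` network code over the field `F` (with `|F| = q`): a network code
all of whose global and local encoding functions are `F`-linear. -/
def IsLinearNetworkCode (N : NetworkInstance m k d) (F : Type) [Field F] (n : ℕ)
    (f : Fin m → (Fin k → Fin n → F) → Fin n → F) : Prop :=
  N.IsNetworkCode n f ∧ (∀ e : Fin m, IsLinearMap F (f e)) ∧
  (∀ e : Fin m, k ≤ (e : ℕ) →
    ∃ φ : ({p : Fin m // p ∈ N.P e} → Fin n → F) → Fin n → F,
      IsLinearMap F φ ∧ ∀ X : Fin k → Fin n → F, f e X = φ fun p => f p.1 X)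

end NetworkInstance

namespace NetworkInstance

variable {m k d : ℕ}

/-- The reduction from the Network Coding problem to the Index Coding problem.
The index coding instance `I_N` has message set `Y = {y_e : e ∈ E} ∪ {x_1, …, x_k}`
(indexed by `Fin k ⊕ Fin m`, where `Sum.inl i` is the message `x_i` and `Sum.inr e`
is the message `y_e`), and client set `R = R1 ∪ R2 ∪ R3 ∪ R4 ∪ R5` where
`R1 = {(x_i, {y_i}) : e_i ∈ S}`, `R2 = {(y_i, {x_i}) : e_i ∈ S}`,
`R3 = {(y_i, {y_j : e_j ∈ P(e_i)}) : e_i ∈ E \ S}`,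
`R4 = {(δ(e_i), {y_i}) : e_i ∈ D}`, and `R5 = {(y_i, X) : e_i ∈ E}`. -/
def reduction (N : NetworkInstance m k d) :
    Finset ((Fin k ⊕ Fin m) × Finset (Fin k ⊕ Fin m)) :=
  ((Finset.univ : Finset (Fin k)).image fun i =>
      (Sum.inl i, ({Sum.inr (Fin.castLE N.k_le_m i)} : Finset (Fin k ⊕ Fin m)))) ∪
  ((Finset.univ : Finset (Fin k)).image fun i =>
      (Sum.inr (Fin.castLE N.k_le_m i), ({Sum.inl i} : Finset (Fin k ⊕ Fin m)))) ∪
  ((Finset.univ.filter fun e : Fin m => k ≤ (e : ℕ)).image fun e =>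
      (Sum.inr e, (N.P e).image Sum.inr)) ∪
  ((Finset.univ.filter fun e : Fin m => m - d ≤ (e : ℕ)).image fun e =>
      (Sum.inl (N.δ e), ({Sum.inr e} : Finset (Fin k ⊕ Fin m)))) ∪
  ((Finset.univ : Finset (Fin m)).image fun e =>
      (Sum.inr e, (Finset.univ : Finset (Fin k)).image Sum.inl))

end NetworkInstance


section Factor
variable {F : Type} [Field F] {V W₁ W₂ : Type}
  [AddCommGroup V] [Module F V] [AddCommGroup W₁] [Module F W₁]
  [AddCommGroup W₂] [Module F W₂]

theorem factor_through (p : V →ₗ[F] W₁) (q : V →ₗ[F] W₂)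
    (h : ∀ x, p x = 0 → q x = 0) : ∃ h : W₁ →ₗ[F] W₂, ∀ x, q x = h (p x) := by
  have hle : LinearMap.ker p ≤ LinearMap.ker q := fun x hx => h x hx
  obtain ⟨g, hgx⟩ := LinearMap.exists_extend
    (((LinearMap.ker p).liftQ q hle).comp p.quotKerEquivRange.symm.toLinearMap)
  refine ⟨g, fun x => ?_⟩
  have h1 : p x ∈ LinearMap.range p := LinearMap.mem_range_self p x
  have h2 : g (p x) = g ((LinearMap.range p).subtype ⟨p x, h1⟩) := rfl
  rw [h2, ← LinearMap.comp_apply, hgx, LinearMap.comp_apply,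
    LinearEquiv.coe_coe, LinearMap.quotKerEquivRange_symm_apply_image]
  exact (Submodule.liftQ_apply _ q x).symm

end Factor

/-- if the index coding instance `I_N` obtained by the reduction from a
network coding instance `N` (with `m` edges and `k` messages) has a linear `(n, q)`
index code of length `ℓ = n · m` over the finite field `F = F_q` (i.e., a linear
index code of rate `m = μ(I_N)`), then `N` has a linear `(n, q)` network code
over `F`. -/
theorem linear_index_code_to_linear_network_code {m k d : ℕ}
    (N : NetworkInstance m k d) (F : Type) [Field F] [Fintype F] (n : ℕ)
    (g : ((Fin k ⊕ Fin m) → Fin n → F) → Fin (n * m) → F)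
    (hg_lin : IsLinearMap F g) (hg : IsIndexCode N.reduction n (n * m) g) :
    ∃ f : Fin m → (Fin k → Fin n → F) → Fin n → F,
      N.IsLinearNetworkCode F n f := by
  classical
  -- bundled versions of g and the two inclusions
  let G : ((Fin k ⊕ Fin m) → Fin n → F) →ₗ[F] (Fin (n * m) → F) := IsLinearMap.mk' g hg_lin
  let elimL : (Fin k → Fin n → F) →ₗ[F] ((Fin k ⊕ Fin m) → Fin n → F) :=
    { toFun := fun x => Sum.elim x 0
      map_add' := fun x x' => funext fun j => by cases j <;> simp
      map_smul' := fun c x => funext fun j => by cases j <;> simp }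
  let elimR : (Fin m → Fin n → F) →ₗ[F] ((Fin k ⊕ Fin m) → Fin n → F) :=
    { toFun := fun y => Sum.elim 0 y
      map_add' := fun x x' => funext fun j => by cases j <;> simp
      map_smul' := fun c x => funext fun j => by cases j <;> simp }
  let A := G.comp elimL
  let B := G.comp elimR
  have hsplit : ∀ (x : Fin k → Fin n → F) (y : Fin m → Fin n → F),
      Sum.elim x y = elimL x + elimR y := by
    intro x y
    funext j
    have : (elimL x + elimR y) j = Sum.elim x (0 : Fin m → Fin n → F) j + Sum.elim (0 : Fin k → Fin n → F) y j := rfl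
    rw [this]
    cases j <;> simp
  -- membership lemmas for the clients we use
  have memR2 : ∀ i : Fin k,
      ((Sum.inr (Fin.castLE N.k_le_m i) : Fin k ⊕ Fin m),
        ({Sum.inl i} : Finset (Fin k ⊕ Fin m))) ∈ N.reduction := by
    intro i
    unfold NetworkInstance.reduction
    refine Finset.mem_union_left _ (Finset.mem_union_left _ (Finset.mem_union_left _
      (Finset.mem_union_right _ ?_)))
    exact Finset.mem_image_of_mem _ (Finset.mem_univ i)
  have memR3 : ∀ e : Fin m, k ≤ (e : ℕ) →
      ((Sum.inr e : Fin k ⊕ Fin m), (N.P e).image Sum.inr) ∈ N.reduction := by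
    intro e he
    unfold NetworkInstance.reduction
    refine Finset.mem_union_left _ (Finset.mem_union_left _ (Finset.mem_union_right _ ?_))
    exact Finset.mem_image_of_mem _ (Finset.mem_filter.2 ⟨Finset.mem_univ e, he⟩)
  have memR4 : ∀ e : Fin m, m - d ≤ (e : ℕ) →
      ((Sum.inl (N.δ e) : Fin k ⊕ Fin m),
        ({Sum.inr e} : Finset (Fin k ⊕ Fin m))) ∈ N.reduction := by
    intro e he
    unfold NetworkInstance.reduction
    refine Finset.mem_union_left _ (Finset.mem_union_right _ ?_)
    exact Finset.mem_image_of_mem _ (Finset.mem_filter.2 ⟨Finset.mem_univ e, he⟩)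
  have memR5 : ∀ e : Fin m,
      ((Sum.inr e : Fin k ⊕ Fin m),
        (Finset.univ : Finset (Fin k)).image Sum.inl) ∈ N.reduction := by
    intro e
    unfold NetworkInstance.reduction
    exact Finset.mem_union_right _ (Finset.mem_image_of_mem _ (Finset.mem_univ e))
  -- B is injective, hence bijective
  have hBinj : Function.Injective B := by
    intro y y' hyy
    funext e
    exact hg _ (memR5 e) (Sum.elim 0 y) (Sum.elim 0 y') hyy
      (fun j hj => by
        obtain ⟨i, -, rfl⟩ := Finset.mem_image.1 hj
        rfl)
  have hfr : Module.finrank F (Fin m → Fin n → F) = Module.finrank F (Fin (n * m) → F) := by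
    rw [Module.finrank_fintype_fun_eq_card, Fintype.card_fin, Module.finrank_pi_fintype]
    simp [Module.finrank_fintype_fun_eq_card, mul_comm]
  have hBsurj : Function.Surjective B :=
    (LinearMap.injective_iff_surjective_of_finrank_eq_finrank hfr).mp hBinj
  -- the canonical edge-messages map
  have hYe : ∃ Ym : (Fin k → Fin n → F) →ₗ[F] (Fin m → Fin n → F),
      ∀ x, g (Sum.elim x (Ym x)) = 0 := by
    let E := LinearEquiv.ofBijective B ⟨hBinj, hBsurj⟩
    refine ⟨-(E.symm.toLinearMap.comp A), fun x => ?_⟩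
    have h1 : g (Sum.elim x ((-(E.symm.toLinearMap.comp A)) x))
        = A x + B ((-(E.symm.toLinearMap.comp A)) x) := by
      rw [hsplit]; exact hg_lin.map_add _ _
    rw [h1]
    have h2 : ((-(E.symm.toLinearMap.comp A)) x) = -(E.symm (A x)) := rfl
    rw [h2, map_neg]
    have h3 : B (E.symm (A x)) = A x := E.apply_symm_apply (A x)
    rw [h3, add_neg_cancel]
  obtain ⟨Ym, key⟩ := hYe
  -- decoding in homogeneous form
  have hker : ∀ r ∈ N.reduction, ∀ x,
      (∀ j ∈ r.2, Sum.elim x (Ym x) j = (0 : Fin n → F)) →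
      Sum.elim x (Ym x) r.1 = (0 : Fin n → F) := by
    intro r hr x hx
    have h0 : Sum.elim (0 : Fin k → Fin n → F) (Ym 0)
        = fun _ : Fin k ⊕ Fin m => (0 : Fin n → F) := by
      rw [map_zero]; funext j; cases j <;> rfl
    have := hg r hr (Sum.elim x (Ym x)) (Sum.elim 0 (Ym 0)) (by rw [key, key])
      (fun j hj => by rw [hx j hj, h0])
    rw [this, h0]
  -- R2 clients: L i
  have hLs : ∀ i : Fin k, ∃ L : (Fin n → F) →ₗ[F] (Fin n → F),
      ∀ x, Ym x (Fin.castLE N.k_le_m i) = L (x i) := by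
    intro i
    obtain ⟨L, hL⟩ := factor_through
      (LinearMap.proj (R := F) (φ := fun _ : Fin k => Fin n → F) i)
      ((LinearMap.proj (R := F) (φ := fun _ : Fin m => Fin n → F)
        (Fin.castLE N.k_le_m i)).comp Ym)
      (fun x hx => hker _ (memR2 i) x (fun j hj => by
        rw [Finset.mem_singleton] at hj
        subst hj
        exact hx))
    exact ⟨L, fun x => hL x⟩
  choose L hL using hLs
  -- R4 clients: T e
  have hTs : ∀ e : Fin m, m - d ≤ (e : ℕ) → ∃ T : (Fin n → F) →ₗ[F] (Fin n → F),
      ∀ x, x (N.δ e) = T (Ym x e) := by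
    intro e he
    obtain ⟨T, hT⟩ := factor_through
      ((LinearMap.proj (R := F) (φ := fun _ : Fin m => Fin n → F) e).comp Ym)
      (LinearMap.proj (R := F) (φ := fun _ : Fin k => Fin n → F) (N.δ e))
      (fun x hx => hker _ (memR4 e he) x (fun j hj => by
        rw [Finset.mem_singleton] at hj
        subst hj
        exact hx))
    exact ⟨T, fun x => hT x⟩
  choose T hT using hTs
  -- R3 clients: ψ e
  have hψs : ∀ e : Fin m, k ≤ (e : ℕ) →
      ∃ ψ : ({p : Fin m // p ∈ N.P e} → Fin n → F) →ₗ[F] (Fin n → F),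
        ∀ x, Ym x e = ψ fun p => Ym x p.1 := by
    intro e he
    obtain ⟨ψ, hψ⟩ := factor_through
      (LinearMap.pi (fun p : {p : Fin m // p ∈ N.P e} =>
        (LinearMap.proj (R := F) (φ := fun _ : Fin m => Fin n → F) p.1).comp Ym))
      ((LinearMap.proj (R := F) (φ := fun _ : Fin m => Fin n → F) e).comp Ym)
      (fun x hx => hker _ (memR3 e he) x (fun j hj => by
        obtain ⟨p, hp, rfl⟩ := Finset.mem_image.1 hj
        exact congrFun hx ⟨p, hp⟩))
    exact ⟨ψ, fun x => hψ x⟩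
  choose ψ hψ using hψs
  -- the network code
  have hfe : ∃ fF : Fin m → (Fin k → Fin n → F) → Fin n → F,
      (∀ (e : Fin m) (h : (e : ℕ) < k) (X : Fin k → Fin n → F), fF e X = X ⟨(e : ℕ), h⟩) ∧
      (∀ e : Fin m, m - d ≤ (e : ℕ) → ∀ X : Fin k → Fin n → F, fF e X = X (N.δ e)) ∧
      (∀ e : Fin m, k ≤ (e : ℕ) → (e : ℕ) < m - d →
        ∀ X : Fin k → Fin n → F, fF e X = Ym X e) := by
    refine ⟨fun e X => if h : (e : ℕ) < k then X ⟨(e : ℕ), h⟩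
      else if m - d ≤ (e : ℕ) then X (N.δ e) else Ym X e,
      fun e h X => by simp only [dif_pos h], fun e he X => ?_, fun e hk1 hd X => ?_⟩
    · have hnk : ¬ (e : ℕ) < k := not_lt.2 (le_trans (Nat.le_sub_of_add_le N.hkd) he)
      simp only [dif_neg hnk, if_pos he]
    · simp only [dif_neg (not_lt.2 hk1), if_neg (not_le.2 hd)]
  obtain ⟨fF, hf1, hf2, hf3⟩ := hfe
  -- uniform descriptions
  have hCe : ∀ e : Fin m, k ≤ (e : ℕ) → ∃ C : (Fin n → F) →ₗ[F] (Fin n → F),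
      ∀ X, fF e X = C (Ym X e) := by
    intro e he
    by_cases hd : m - d ≤ (e : ℕ)
    · exact ⟨T e hd, fun X => by rw [hf2 e hd X]; exact hT e hd X⟩
    · exact ⟨LinearMap.id, fun X => by rw [hf3 e he (not_le.1 hd) X]; rfl⟩
  have hDe : ∀ e p : Fin m, p ∈ N.P e → ∃ Dp : (Fin n → F) →ₗ[F] (Fin n → F),
      ∀ X, Ym X p = Dp (fF p X) := by
    intro e p hp
    by_cases h : (p : ℕ) < k
    · refine ⟨L ⟨(p : ℕ), h⟩, fun X => ?_⟩
      rw [hf1 p h X]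
      have hc : Fin.castLE N.k_le_m ⟨(p : ℕ), h⟩ = p := Fin.ext rfl
      conv_lhs => rw [← hc]
      exact hL ⟨(p : ℕ), h⟩ X
    · refine ⟨LinearMap.id, fun X => ?_⟩
      rw [hf3 p (not_lt.1 h) (N.output_no_child e p hp) X]; rfl
  -- strong N3
  have hN3 : ∀ e : Fin m, k ≤ (e : ℕ) →
      ∃ φ : ({p : Fin m // p ∈ N.P e} → Fin n → F) → Fin n → F,
        IsLinearMap F φ ∧ ∀ X, fF e X = φ fun p => fF p.1 X := by
    intro e he
    obtain ⟨C, hC⟩ := hCe e he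
    choose Dp hDp using fun p : {p : Fin m // p ∈ N.P e} => hDe e p.1 p.2
    refine ⟨C ∘ₗ (ψ e he) ∘ₗ LinearMap.pi (fun p => (Dp p).comp (LinearMap.proj p)),
      LinearMap.isLinear _, fun X => ?_⟩
    rw [hC X, hψ e he X]
    have harg : (fun p : {p : Fin m // p ∈ N.P e} => Ym X p.1)
        = fun p => Dp p (fF p.1 X) := funext fun p => hDp p X
    rw [harg]
    rfl
  -- linearity of each fF e
  have hlin : ∀ e : Fin m, IsLinearMap F (fF e) := by
    intro e
    rcases lt_or_ge (e : ℕ) k with h | h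
    · exact ⟨fun X X' => by rw [hf1 e h (X + X'), hf1 e h X, hf1 e h X']; rfl,
        fun c X => by rw [hf1 e h (c • X), hf1 e h X]; rfl⟩
    rcases lt_or_ge (e : ℕ) (m - d) with h2 | h2
    · exact ⟨fun X X' => by
        rw [hf3 e h h2 (X + X'), hf3 e h h2 X, hf3 e h h2 X', map_add]; rfl,
        fun c X => by rw [hf3 e h h2 (c • X), hf3 e h h2 X, map_smul]; rfl⟩
    · exact ⟨fun X X' => by rw [hf2 e h2 (X + X'), hf2 e h2 X, hf2 e h2 X']; rfl,
        fun c X => by rw [hf2 e h2 (c • X), hf2 e h2 X]; rfl⟩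
  exact ⟨fF, ⟨hf1, fun e he X => hf2 e he X,
    fun e he => (hN3 e he).imp fun φ hφ => hφ.2⟩, hlin, hN3⟩
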